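/- With S(z) := -Q(z)⁻¹Q(z⁻¹) defined for z on the unit circle where the inverses exist, one has S(z)† = S(z⁻¹) and S(z⁻¹) = S(z)⁻¹. -/

import Mathlib

open Matrix

/-- `Q(z) = 1 - z (A + Bᴴ (z⁻¹ + z - D)⁻¹ B)`. -/
noncomputable def Qmat {n m : ℕ} (A : Matrix (Fin n) (Fin n) ℂ)
    (B : Matrix (Fin m) (Fin n) ℂ) (D : Matrix (Fin m) (Fin m) ℂ) (z : ℂ) :
    Matrix (Fin n) (Fin n) ℂ :=
  1 - z • (A + Bᴴ * ((z⁻¹ + z) • (1 : Matrix (Fin m) (Fin m) ℂ) - D)⁻¹ * B)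

/-- `S(z) = -Q(z)⁻¹ Q(z⁻¹)`. -/
noncomputable def Smat {n m : ℕ} (A : Matrix (Fin n) (Fin n) ℂ)
    (B : Matrix (Fin m) (Fin n) ℂ) (D : Matrix (Fin m) (Fin m) ℂ) (z : ℂ) :
    Matrix (Fin n) (Fin n) ℂ :=
  -((Qmat A B D z)⁻¹ * Qmat A B D z⁻¹)

theorem stmt2 {n m : ℕ} (A : Matrix (Fin n) (Fin n) ℂ) (hA : A.IsHermitian)
    (D : Matrix (Fin m) (Fin m) ℂ) (hD : D.IsHermitian)
    (B : Matrix (Fin m) (Fin n) ℂ) (z : ℂ) (hz : ‖z‖ = 1)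
    (hinvD : IsUnit ((z⁻¹ + z) • (1 : Matrix (Fin m) (Fin m) ℂ) - D).det)
    (hQz : IsUnit (Qmat A B D z).det)
    (hQzi : IsUnit (Qmat A B D z⁻¹).det) :
    (Smat A B D z)ᴴ = Smat A B D z⁻¹ ∧ Smat A B D z⁻¹ = (Smat A B D z)⁻¹ := by
  have hz0 : z ≠ 0 := by
    intro h; rw [h] at hz; simp at hz
  have hns : Complex.normSq z = 1 := by
    rw [← Complex.sq_norm, hz]; norm_num
  have hcz : (starRingEnd ℂ) z = z⁻¹ := by
    rw [Complex.inv_def, hns]; simp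
  have hstar : star (z⁻¹ + z) = z⁻¹ + z := by
    rw [star_add, star_inv₀, Complex.star_def, hcz, inv_inv, add_comm]
  set X := ((z⁻¹ + z) • (1 : Matrix (Fin m) (Fin m) ℂ) - D) with hXdef
  set M := A + Bᴴ * X⁻¹ * B with hMdef
  have hXH : Xᴴ = X := by
    rw [hXdef, conjTranspose_sub, Matrix.conjTranspose_smul, conjTranspose_one, hD.eq,
      hstar]
  have hMH : Mᴴ = M := by
    rw [hMdef, conjTranspose_add, hA.eq, conjTranspose_mul, conjTranspose_mul,
      conjTranspose_conjTranspose, conjTranspose_nonsing_inv, hXH, ← Matrix.mul_assoc]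
  have hQz_eq : Qmat A B D z = 1 - z • M := rfl
  have hQzi_eq : Qmat A B D z⁻¹ = 1 - z⁻¹ • M := by
    rw [Qmat, inv_inv, add_comm z z⁻¹, ← hXdef, ← hMdef]
  set Q := Qmat A B D z with hQdef
  set Q' := Qmat A B D z⁻¹ with hQ'def
  have hQH : Qᴴ = Q' := by
    rw [hQz_eq, hQzi_eq, conjTranspose_sub, conjTranspose_one, Matrix.conjTranspose_smul,
      hMH, Complex.star_def, hcz]
  have hQ'H : Q'ᴴ = Q := by rw [← hQH, conjTranspose_conjTranspose]
  have hcomm : Q * Q' = Q' * Q := by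
    rw [hQz_eq, hQzi_eq]
    simp only [Matrix.sub_mul, Matrix.mul_sub, Matrix.one_mul, Matrix.mul_one,
      Matrix.smul_mul, Matrix.mul_smul, smul_smul, smul_sub]
    rw [mul_comm z z⁻¹]
    abel
  have hQQi : Q * Q⁻¹ = 1 := Matrix.mul_nonsing_inv _ hQz
  have hQiQ : Q⁻¹ * Q = 1 := Matrix.nonsing_inv_mul _ hQz
  have hQ'Q'i : Q' * Q'⁻¹ = 1 := Matrix.mul_nonsing_inv _ hQzi
  have hQ'iQ' : Q'⁻¹ * Q' = 1 := Matrix.nonsing_inv_mul _ hQzi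
  have hc2 : Q * Q'⁻¹ = Q'⁻¹ * Q := by
    calc Q * Q'⁻¹ = (Q'⁻¹ * Q') * (Q * Q'⁻¹) := by rw [hQ'iQ', Matrix.one_mul]
      _ = Q'⁻¹ * ((Q' * Q) * Q'⁻¹) := by simp only [Matrix.mul_assoc]
      _ = Q'⁻¹ * ((Q * Q') * Q'⁻¹) := by rw [hcomm]
      _ = Q'⁻¹ * (Q * (Q' * Q'⁻¹)) := by simp only [Matrix.mul_assoc]
      _ = Q'⁻¹ * Q := by rw [hQ'Q'i, Matrix.mul_one]
  have hSz : Smat A B D z = -(Q⁻¹ * Q') := rfl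
  have hSzi : Smat A B D z⁻¹ = -(Q'⁻¹ * Q) := by
    rw [Smat, inv_inv, ← hQdef, ← hQ'def]
  constructor
  · rw [hSz, hSzi, conjTranspose_neg, conjTranspose_mul, conjTranspose_nonsing_inv,
      hQH, hQ'H, hc2]
  · rw [hSzi]
    symm
    apply Matrix.inv_eq_left_inv
    rw [hSz, Matrix.neg_mul, Matrix.mul_neg, neg_neg, Matrix.mul_assoc,
      ← Matrix.mul_assoc Q, hQQi, Matrix.one_mul, hQ'iQ']
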